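/- For every h ∈ V^w(ℝ₊), every ρ > 0, and all s, z > 0, one has |h(s) - h(z)| ≤ 16 (1 + ρ²)² (1 + (log z)²) (1 + |log s - log z|⁵/ρ⁵) Υ(h, ρ). -/

import Mathlib

open Real

/-- Weighted logarithmic modulus of continuity. -/
noncomputable def Upsilon (h : ℝ → ℝ) (ρ : ℝ) : ℝ :=
  sSup {y : ℝ | ∃ u z : ℝ, 0 < u ∧ 0 < z ∧ |Real.log u| ≤ ρ ∧
    y = |h (u * z) - h z| / ((1 + (Real.log z) ^ 2) * (1 + (Real.log u) ^ 2))}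

/-- Log-uniform continuity on the positive reals. -/
def LogUC (g : ℝ → ℝ) : Prop :=
  ∀ ε : ℝ, 0 < ε → ∃ δ : ℝ, 0 < δ ∧ ∀ z₁ : ℝ, 0 < z₁ → ∀ z₂ : ℝ, 0 < z₂ →
    |Real.log z₁ - Real.log z₂| ≤ δ → |g z₁ - g z₂| < ε

/-- Membership in the weighted space `V^w(ℝ₊)` with `w z = 1/(1+(log z)^2)`:
`w·h` is log-uniformly continuous and bounded. -/
def MemVw (h : ℝ → ℝ) : Prop :=
  LogUC (fun z => h z / (1 + (Real.log z) ^ 2)) ∧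
    ∃ K : ℝ, ∀ z : ℝ, 0 < z → |h z| / (1 + (Real.log z) ^ 2) ≤ K

set_option maxHeartbeats 1600000 in
theorem Upsilon_pointwise_bound (h : ℝ → ℝ) (hmem : MemVw h) :
    ∀ ρ : ℝ, 0 < ρ → ∀ s z : ℝ, 0 < s → 0 < z →
      |h s - h z| ≤ 16 * (1 + ρ ^ 2) ^ 2 * (1 + (Real.log z) ^ 2) *
        (1 + |Real.log s - Real.log z| ^ 5 / ρ ^ 5) * Upsilon h ρ := by
  obtain ⟨-, K, hK⟩ := hmem
  intro ρ hρ s z hs hz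
  have hK0 : 0 ≤ K := le_trans (by positivity) (hK 1 one_pos)
  have hbdd : BddAbove {y : ℝ | ∃ u z : ℝ, 0 < u ∧ 0 < z ∧ |Real.log u| ≤ ρ ∧
      y = |h (u * z) - h z| / ((1 + (Real.log z) ^ 2) * (1 + (Real.log u) ^ 2))} := by
    refine ⟨3 * K, ?_⟩
    rintro y ⟨u, w, hu, hw, hlu, rfl⟩
    have h1 : |h (u * w)| ≤ K * (1 + (Real.log (u * w)) ^ 2) := by
      have := hK (u * w) (mul_pos hu hw)
      rw [div_le_iff₀ (by positivity)] at this
      linarith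
    have h2 : |h w| ≤ K * (1 + (Real.log w) ^ 2) := by
      have := hK w hw
      rw [div_le_iff₀ (by positivity)] at this
      linarith
    have hlog : Real.log (u * w) = Real.log u + Real.log w :=
      Real.log_mul (ne_of_gt hu) (ne_of_gt hw)
    rw [div_le_iff₀ (by positivity)]
    have habs : |h (u * w) - h w| ≤ |h (u * w)| + |h w| := abs_sub _ _
    rw [hlog] at h1
    nlinarith [sq_nonneg (Real.log u + Real.log w), sq_nonneg (Real.log u - Real.log w),
      sq_nonneg (Real.log u), sq_nonneg (Real.log w),
      mul_nonneg hK0 (sq_nonneg (Real.log u * Real.log w)),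
      mul_nonneg hK0 (sq_nonneg (Real.log u - Real.log w)),
      mul_nonneg hK0 (sq_nonneg (Real.log u + Real.log w))]
  have hUps0 : 0 ≤ Upsilon h ρ := by
    apply le_csSup hbdd
    exact ⟨1, 1, one_pos, one_pos, by simp [le_of_lt hρ], by simp⟩
  have hUkey : ∀ u w : ℝ, 0 < u → 0 < w → |Real.log u| ≤ ρ →
      |h (u * w) - h w| ≤ (1 + (Real.log w) ^ 2) * (1 + (Real.log u) ^ 2) * Upsilon h ρ := by
    intro u w hu hw hlu
    have hmemS := le_csSup hbdd ⟨u, w, hu, hw, hlu, rfl⟩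
    rw [div_le_iff₀ (by positivity)] at hmemS
    calc |h (u * w) - h w| ≤ Upsilon h ρ * ((1 + (Real.log w) ^ 2) * (1 + (Real.log u) ^ 2)) :=
          hmemS
      _ = _ := by ring
  set L := Real.log z with hL
  set t := Real.log s - Real.log z with ht
  rcases eq_or_ne t 0 with h0 | h0
  · have hlseq : Real.log s = Real.log z := by
      have := sub_eq_zero.mp h0
      linarith
    have hsz : s = z :=
      Real.log_injOn_pos (Set.mem_Ioi.mpr hs) (Set.mem_Ioi.mpr hz) hlseq
    rw [hsz, sub_self, abs_zero]
    have hpos : (0:ℝ) ≤ 16 * (1 + ρ ^ 2) ^ 2 * (1 + L ^ 2) * (1 + |t| ^ 5 / ρ ^ 5) := by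
      positivity
    exact mul_nonneg hpos hUps0
  -- main case
  set n : ℕ := ⌈|t| / ρ⌉₊ with hn
  have htpos : 0 < |t| := abs_pos.mpr h0
  have hxpos : 0 < |t| / ρ := div_pos htpos hρ
  have hn1 : 1 ≤ n := Nat.one_le_ceil_iff.mpr hxpos
  have hnpos : (0:ℝ) < (n:ℝ) := by exact_mod_cast hn1
  have hnt : |t| ≤ (n:ℝ) * ρ := by
    have := Nat.le_ceil (|t| / ρ)
    rw [div_le_iff₀ hρ] at this
    exact this
  have hn2 : (n:ℝ) ≤ |t| / ρ + 1 := le_of_lt (Nat.ceil_lt_add_one (le_of_lt hxpos))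
  clear_value n
  set g : ℕ → ℝ := fun k => h (Real.exp (L + k * (t / n))) with hg
  have hg0 : g 0 = h z := by simp [hg, hL, Real.exp_log hz]
  have hgn : g n = h s := by
    have hne : (n:ℝ) ≠ 0 := ne_of_gt hnpos
    have : L + (n:ℝ) * (t / n) = Real.log s := by
      rw [mul_div_cancel₀ _ hne, ht, hL]; ring
    simp only [hg, this, Real.exp_log hs]
  set B : ℝ := 2 * (1 + L ^ 2) * (1 + t ^ 2) * (1 + ρ ^ 2) * Upsilon h ρ with hB
  have hterm : ∀ k ∈ Finset.range n, |g (k + 1) - g k| ≤ B := by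
    intro k hk
    have hkn : (k:ℝ) < (n:ℝ) := by exact_mod_cast Finset.mem_range.mp hk
    set u : ℝ := Real.exp (t / n) with hudef
    set w : ℝ := Real.exp (L + k * (t / n)) with hwdef
    have hu : 0 < u := Real.exp_pos _
    have hw : 0 < w := Real.exp_pos _
    have hlu : Real.log u = t / n := Real.log_exp _
    have hlw : Real.log w = L + k * (t / n) := Real.log_exp _
    have hluρ : |Real.log u| ≤ ρ := by
      rw [hlu, abs_div, abs_of_pos hnpos, div_le_iff₀ hnpos]
      linarith [hnt]
    have huw : u * w = Real.exp (L + (k + 1 : ℕ) * (t / n)) := by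
      rw [hudef, hwdef, ← Real.exp_add]
      congr 1
      push_cast
      ring
    have hgdiff : g (k + 1) - g k = h (u * w) - h w := by
      rw [hg]
      simp only [huw]
      rfl
    rw [hgdiff]
    have hkey := hUkey u w hu hw hluρ
    -- bound the factors
    have hc2 : ((k:ℝ) * (t / n)) ^ 2 ≤ t ^ 2 := by
      have hk0 : (0:ℝ) ≤ (k:ℝ) := Nat.cast_nonneg k
      have h1 : |(k:ℝ) * (t / n)| ≤ |t| := by
        rw [abs_mul, abs_div, abs_of_nonneg hk0, abs_of_pos hnpos, mul_div_assoc',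
          div_le_iff₀ hnpos]
        nlinarith [mul_le_mul_of_nonneg_right hkn.le (abs_nonneg t)]
      have h2 := pow_le_pow_left₀ (abs_nonneg ((k:ℝ) * (t / n))) h1 2
      rwa [sq_abs, sq_abs] at h2
    have hd2 : (t / (n:ℝ)) ^ 2 ≤ ρ ^ 2 := by
      have h1 : |t / (n:ℝ)| ≤ ρ := by rw [← hlu]; exact hluρ
      have h2 := pow_le_pow_left₀ (abs_nonneg (t / (n:ℝ))) h1 2
      rwa [sq_abs] at h2
    have e1 : 1 + (Real.log w) ^ 2 ≤ 2 * (1 + L ^ 2) * (1 + t ^ 2) := by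
      rw [hlw]
      nlinarith [hc2, sq_nonneg (L - (k:ℝ) * (t / n)), sq_nonneg L, sq_nonneg t, mul_nonneg (sq_nonneg L) (sq_nonneg t)]
    have e2 : 1 + (Real.log u) ^ 2 ≤ 1 + ρ ^ 2 := by
      rw [hlu]; linarith
    have hmul : (1 + (Real.log w) ^ 2) * (1 + (Real.log u) ^ 2) ≤
        2 * (1 + L ^ 2) * (1 + t ^ 2) * (1 + ρ ^ 2) :=
      mul_le_mul e1 e2 (by positivity) (by positivity)
    calc |h (u * w) - h w| ≤ (1 + (Real.log w) ^ 2) * (1 + (Real.log u) ^ 2) * Upsilon h ρ :=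
          hkey
      _ ≤ B := by
          rw [hB]
          exact mul_le_mul_of_nonneg_right hmul hUps0
  have hsum : |h s - h z| ≤ (n:ℝ) * B := by
    have htele : h s - h z = ∑ k ∈ Finset.range n, (g (k + 1) - g k) := by
      rw [Finset.sum_range_sub, hg0, hgn]
    rw [htele]
    calc |∑ k ∈ Finset.range n, (g (k + 1) - g k)| ≤
          ∑ k ∈ Finset.range n, |g (k + 1) - g k| := Finset.abs_sum_le_sum_abs _ _
      _ ≤ (Finset.range n).card • B := Finset.sum_le_card_nsmul _ _ B hterm
      _ = (n:ℝ) * B := by simp [nsmul_eq_mul]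
  -- final arithmetic
  set x : ℝ := |t| / ρ with hx
  have hx0 : 0 ≤ x := le_of_lt hxpos
  have hx5 : |t| ^ 5 / ρ ^ 5 = x ^ 5 := by
    rw [hx, div_pow]
  have hρ2 : ρ ^ 2 ≠ 0 := by positivity
  have ht2 : t ^ 2 = x ^ 2 * ρ ^ 2 := by
    rw [hx, div_pow, div_mul_cancel₀ _ hρ2, sq_abs]
  have hk1 : x ≤ 1 + x ^ 5 := by
    nlinarith [sq_nonneg (x - 1), sq_nonneg (x ^ 2 - x), sq_nonneg (x ^ 2 - 1), mul_nonneg (mul_nonneg hx0 hx0) hx0, mul_nonneg (mul_nonneg (mul_nonneg hx0 hx0) hx0) (sq_nonneg (x - 1))]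
  have hk2 : x ^ 2 ≤ 1 + x ^ 5 := by
    nlinarith [sq_nonneg (x - 1), sq_nonneg (x ^ 2 - x), sq_nonneg (x ^ 2 - 1), mul_nonneg (mul_nonneg hx0 hx0) hx0, mul_nonneg (mul_nonneg (mul_nonneg hx0 hx0) hx0) (sq_nonneg (x - 1))]
  have hk3 : x ^ 3 ≤ 1 + x ^ 5 := by
    nlinarith [sq_nonneg (x - 1), sq_nonneg (x ^ 2 - x), sq_nonneg (x ^ 2 - 1), mul_nonneg (mul_nonneg hx0 hx0) hx0, mul_nonneg (mul_nonneg (mul_nonneg hx0 hx0) hx0) (sq_nonneg (x - 1))]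
  have s1 : 1 + x ^ 2 * ρ ^ 2 ≤ (1 + ρ ^ 2) * (1 + x ^ 2) := by nlinarith [sq_nonneg x, sq_nonneg ρ]
  have s2 : (x + 1) * (1 + x ^ 2) ≤ 8 * (1 + x ^ 5) := by nlinarith [pow_nonneg hx0 5]
  have hpoly : (x + 1) * (2 * (1 + t ^ 2) * (1 + ρ ^ 2)) ≤
      16 * (1 + ρ ^ 2) ^ 2 * (1 + x ^ 5) := by
    rw [ht2]
    have t1 : (x + 1) * (1 + x ^ 2 * ρ ^ 2) ≤ (x + 1) * ((1 + ρ ^ 2) * (1 + x ^ 2)) :=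
      mul_le_mul_of_nonneg_left s1 (by linarith)
    have t2 : (x + 1) * ((1 + ρ ^ 2) * (1 + x ^ 2)) ≤ (1 + ρ ^ 2) * (8 * (1 + x ^ 5)) := by
      calc (x + 1) * ((1 + ρ ^ 2) * (1 + x ^ 2)) = (1 + ρ ^ 2) * ((x + 1) * (1 + x ^ 2)) := by
            ring
        _ ≤ (1 + ρ ^ 2) * (8 * (1 + x ^ 5)) :=
            mul_le_mul_of_nonneg_left s2 (by positivity)
    nlinarith [mul_le_mul_of_nonneg_left (le_trans t1 t2) (by positivity : (0:ℝ) ≤ 2 * (1 + ρ ^ 2))]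
  calc |h s - h z| ≤ (n:ℝ) * B := hsum
    _ ≤ (x + 1) * B := by
        apply mul_le_mul_of_nonneg_right _ (by rw [hB]; positivity)
        rw [hx]; linarith
    _ = ((x + 1) * (2 * (1 + t ^ 2) * (1 + ρ ^ 2))) * ((1 + L ^ 2) * Upsilon h ρ) := by
        rw [hB]; ring
    _ ≤ (16 * (1 + ρ ^ 2) ^ 2 * (1 + x ^ 5)) * ((1 + L ^ 2) * Upsilon h ρ) :=
        mul_le_mul_of_nonneg_right hpoly (mul_nonneg (by positivity) hUps0)
    _ = 16 * (1 + ρ ^ 2) ^ 2 * (1 + L ^ 2) * (1 + |t| ^ 5 / ρ ^ 5) * Upsilon h ρ := by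
        rw [hx5]; ring
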